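/- The energy operator satisfies E ∘ δ_j = ∂_{j,0} ∘ E and, for t ≥ 1, E_t ∘ δ_j = (−1)^t ∂_{j,t} ∘ E as operators on the differential polynomial algebra 𝒜. -/

import Mathlib

open MvPolynomial

/-- The differential polynomial algebra `𝒜` in the variables `u^{i,s}`,
`1 ≤ i ≤ n`, `s ≥ 0`. -/
abbrev DP (n : ℕ) : Type := MvPolynomial (Fin n × ℕ) ℝ

/-- The total derivative `∂ = Σ u^{i,s+1} ∂_{i,s}` (on each differential
polynomial only finitely many terms act nontrivially). -/
noncomputable def totalDer {n : ℕ} (f : DP n) : DP n :=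
  ∑ v ∈ f.vars, X (v.1, v.2 + 1) * pderiv v f

/-- A bound such that `∂_{i,k} f = 0` for all `k ≥ vbound f`. -/
noncomputable def vbound {n : ℕ} (f : DP n) : ℕ := (f.vars.sup (fun v => v.2)) + 1

/-- The higher generalized momentum operator
`p_{i,α,s} = Σ_{t≥0} (-1)^t C(t+s,s) ∂^t ∘ ∂_{i,α+s+t}`; the sum is finite on each
differential polynomial, and is truncated at a sufficiently large bound. -/
noncomputable def pmom {n : ℕ} (i : Fin n) (α s : ℕ) (f : DP n) : DP n :=
  ∑ t ∈ Finset.range (vbound f),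
    ((-1 : ℝ) ^ t * (Nat.choose (t + s) s : ℝ)) • totalDer^[t] (pderiv (i, α + s + t) f)

/-- The higher energy operator `E_s = Σ_{α≥1} u^{i,α} p_{i,α,s}`. -/
noncomputable def Eop {n : ℕ} (s : ℕ) (f : DP n) : DP n :=
  ∑ i : Fin n, ∑ α ∈ Finset.Icc 1 (vbound f), X (i, α) * pmom i α s f

/-- The energy operator `E = E₀ - 1`. -/
noncomputable def Ener {n : ℕ} (f : DP n) : DP n := Eop 0 f - f


namespace Aux
variable {n : ℕ}

/-- partial derivatives commute -/
lemma pderiv_comm (v w : Fin n × ℕ) (f : DP n) :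
    pderiv v (pderiv w f) = pderiv w (pderiv v f) := by
  induction f using MvPolynomial.induction_on' with
  | monomial d a =>
    by_cases hvw : v = w
    · subst hvw; rfl
    · rw [pderiv_monomial, pderiv_monomial, pderiv_monomial, pderiv_monomial]
      rw [tsub_right_comm]
      congr 1
      rw [Finsupp.tsub_apply, Finsupp.tsub_apply,
        Finsupp.single_eq_of_ne' (Ne.symm hvw), Finsupp.single_eq_of_ne' hvw]
      push_cast [Nat.sub_zero]
      ring
  | add p q hp hq => simp [map_add, hp, hq]

lemma vars_pderiv (v : Fin n × ℕ) (f : DP n) : (pderiv v f).vars ⊆ f.vars := by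
  intro w hw
  rw [mem_vars] at hw
  obtain ⟨d, hd, hwd⟩ := hw
  classical
  have hf : pderiv v f = ∑ d' ∈ f.support, monomial (d' - Finsupp.single v 1) (f.coeff d' * d' v) := by
    conv_lhs => rw [f.as_sum]
    rw [map_sum]
    exact Finset.sum_congr rfl fun d' _ => pderiv_monomial
  rw [hf] at hd
  have := MvPolynomial.support_sum hd
  rw [Finset.mem_biUnion] at this
  obtain ⟨d', hd', hmem⟩ := this
  have := MvPolynomial.support_monomial_subset hmem
  rw [Finset.mem_singleton] at this
  subst this
  rw [mem_vars]
  exact ⟨d', hd', Finsupp.support_tsub hwd⟩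

lemma pderiv_vanish {f : DP n} {i : Fin n} {k : ℕ} (h : vbound f ≤ k) :
    pderiv (i, k) f = 0 := by
  apply pderiv_eq_zero_of_notMem_vars
  intro hmem
  have : k ≤ f.vars.sup (fun v => v.2) := Finset.le_sup (f := fun v => v.2) hmem
  unfold vbound at h
  omega

lemma totalDer_eq_sum {f : DP n} {S : Finset (Fin n × ℕ)} (hS : f.vars ⊆ S) :
    totalDer f = ∑ v ∈ S, X (v.1, v.2 + 1) * pderiv v f := by
  unfold totalDer
  apply Finset.sum_subset hS
  intro v _ hv
  rw [pderiv_eq_zero_of_notMem_vars hv, mul_zero]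

lemma totalDer_add (f g : DP n) : totalDer (f + g) = totalDer f + totalDer g := by
  classical
  rw [totalDer_eq_sum (S := (f+g).vars ∪ (f.vars ∪ g.vars)) (Finset.subset_union_left),
    totalDer_eq_sum (f := f) (S := (f+g).vars ∪ (f.vars ∪ g.vars))
      (subset_trans Finset.subset_union_left (Finset.subset_union_right)),
    totalDer_eq_sum (f := g) (S := (f+g).vars ∪ (f.vars ∪ g.vars))
      (subset_trans Finset.subset_union_right (Finset.subset_union_right)),
    ← Finset.sum_add_distrib]
  exact Finset.sum_congr rfl fun v _ => by rw [map_add, mul_add]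

lemma totalDer_smul (c : ℝ) (f : DP n) : totalDer (c • f) = c • totalDer f := by
  have hv : (c • f).vars ⊆ f.vars := by
    rw [MvPolynomial.smul_eq_C_mul]
    exact subset_trans (vars_mul _ _) (by simp [vars_C])
  rw [totalDer_eq_sum hv, totalDer, Finset.smul_sum]
  exact Finset.sum_congr rfl fun v _ => by rw [Derivation.map_smul, mul_smul_comm]

noncomputable def TD : DP n →ₗ[ℝ] DP n :=
  { toFun := totalDer, map_add' := totalDer_add, map_smul' := totalDer_smul }

@[simp] lemma TD_apply (f : DP n) : TD f = totalDer f := rfl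

lemma TD_pow_apply (m : ℕ) (f : DP n) : (TD ^ m) f = totalDer^[m] f := by
  induction m generalizing f with
  | zero => rfl
  | succ m ih =>
    rw [pow_succ, Function.iterate_succ_apply, Module.End.mul_apply, ← ih]
    rfl

/-- commutation of ∂_{i,0} with the total derivative -/
lemma commA0 (i : Fin n) (f : DP n) :
    pderiv (i, 0) (totalDer f) = totalDer (pderiv (i, 0) f) := by
  classical
  rw [totalDer]
  rw [map_sum]
  have : ∀ v ∈ f.vars, pderiv (i,0) (X (v.1, v.2+1) * pderiv v f)
      = X (v.1, v.2+1) * pderiv v (pderiv (i,0) f) := by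
    intro v _
    rw [pderiv_mul, pderiv_X_of_ne (by simp), zero_mul, zero_add, pderiv_comm]
  rw [Finset.sum_congr rfl this, ← totalDer_eq_sum (vars_pderiv _ f)]

/-- commutation of ∂_{i,k+1} with the total derivative -/
lemma commAS (i : Fin n) (k : ℕ) (f : DP n) :
    pderiv (i, k+1) (totalDer f) = totalDer (pderiv (i, k+1) f) + pderiv (i, k) f := by
  classical
  rw [totalDer, map_sum]
  have : ∀ v ∈ f.vars, pderiv (i,k+1) (X (v.1, v.2+1) * pderiv v f)
      = (if v = (i,k) then pderiv (i,k) f else 0)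
        + X (v.1, v.2+1) * pderiv v (pderiv (i,k+1) f) := by
    intro v _
    rw [pderiv_mul, pderiv_comm]
    congr 1
    by_cases hv : v = (i, k)
    · subst hv; simp [pderiv_X_self]
    · rw [pderiv_X_of_ne, zero_mul, if_neg hv]
      intro hc
      apply hv
      have h1 : v.1 = i := congrArg Prod.fst hc
      have h2 : v.2 + 1 = k + 1 := congrArg Prod.snd hc
      exact Prod.ext h1 (by omega)
  rw [Finset.sum_congr rfl this, Finset.sum_add_distrib, Finset.sum_ite_eq' f.vars (i,k)
    (fun _ => pderiv (i,k) f)]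
  rw [← totalDer_eq_sum (vars_pderiv _ f)]
  by_cases hm : (i,k) ∈ f.vars
  · rw [if_pos hm, add_comm]
  · rw [if_neg hm, pderiv_eq_zero_of_notMem_vars hm, zero_add, add_zero]

end Aux


namespace Aux2

open Aux
variable {n : ℕ}

lemma totalDer_sum {β : Type*} (s : Finset β) (g : β → DP n) :
    totalDer (∑ b ∈ s, g b) = ∑ b ∈ s, totalDer (g b) :=
  map_sum TD g s

lemma totalDer_zero : totalDer (0 : DP n) = 0 := map_zero TD

lemma iter_zero (t : ℕ) : totalDer^[t] (0 : DP n) = 0 := by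
  rw [← TD_pow_apply]; exact map_zero _

noncomputable def PN (i : Fin n) (α s N : ℕ) (f : DP n) : DP n :=
  ∑ t ∈ Finset.range N,
    ((-1 : ℝ) ^ t * (Nat.choose (t + s) s : ℝ)) • totalDer^[t] (pderiv (i, α + s + t) f)

lemma pmom_eq_PN {f : DP n} {i : Fin n} {α s N : ℕ} (h : vbound f ≤ N) :
    pmom i α s f = PN i α s N f := by
  rw [pmom, PN]
  apply Finset.sum_subset (Finset.range_subset_range.2 h)
  intro t _ ht
  rw [Finset.mem_range, not_lt] at ht
  rw [pderiv_vanish (by omega), iter_zero, smul_zero]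

lemma pmom_vanish {f : DP n} {i : Fin n} {α s : ℕ} (h : vbound f ≤ α) :
    pmom i α s f = 0 := by
  rw [pmom]
  apply Finset.sum_eq_zero
  intro t _
  rw [pderiv_vanish (by omega), iter_zero, smul_zero]

lemma PN_R0 (i : Fin n) (α N : ℕ) (f : DP n) :
    PN i α 0 (N+1) f = pderiv (i, α) f - totalDer (PN i (α+1) 0 N f) := by
  rw [PN, PN, totalDer_sum, Finset.sum_range_succ']
  have h0 : ((-1:ℝ)^0 * (Nat.choose (0+0) 0 : ℝ)) • totalDer^[0] (pderiv (i, α+0+0) f)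
      = pderiv (i, α) f := by simp
  rw [h0, sub_eq_neg_add, ← Finset.sum_neg_distrib]
  congr 1
  apply Finset.sum_congr rfl
  intro t _
  rw [totalDer_smul, ← Function.iterate_succ_apply' totalDer]
  have h1 : α + 1 + 0 + t = α + 0 + (t+1) := by omega
  rw [h1]
  have h2 : ((-1:ℝ)^(t+1) * (Nat.choose (t+1+0) 0 : ℝ))
      = -((-1:ℝ)^t * (Nat.choose (t+0) 0 : ℝ)) := by
    simp [pow_succ]
  rw [h2, neg_smul]

lemma PN_R1 (i : Fin n) (α s N : ℕ) (f : DP n) :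
    PN i α (s+1) (N+1) f = PN i (α+1) s (N+1) f - totalDer (PN i (α+1) (s+1) N f) := by
  have key : ∀ t, ((-1:ℝ)^t * (Nat.choose (t+(s+1)) (s+1) : ℝ))
      = ((-1:ℝ)^t * (Nat.choose (t+s) s : ℝ)) + ((-1:ℝ)^t * (Nat.choose (t+s) (s+1) : ℝ)) := by
    intro t
    have h' : t + (s+1) = (t+s)+1 := by omega
    rw [h', Nat.choose_succ_succ]
    push_cast
    ring
  rw [PN]
  calc (∑ t ∈ Finset.range (N+1),
      ((-1 : ℝ) ^ t * (Nat.choose (t + (s+1)) (s+1) : ℝ)) • totalDer^[t] (pderiv (i, α + (s+1) + t) f))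
      = ∑ t ∈ Finset.range (N+1),
        (((-1 : ℝ) ^ t * (Nat.choose (t + s) s : ℝ)) • totalDer^[t] (pderiv (i, α + (s+1) + t) f)
        + ((-1 : ℝ) ^ t * (Nat.choose (t + s) (s+1) : ℝ)) • totalDer^[t] (pderiv (i, α + (s+1) + t) f)) := by
        apply Finset.sum_congr rfl; intro t _; rw [key t, add_smul]
    _ = PN i (α+1) s (N+1) f
        + ∑ t ∈ Finset.range (N+1),
          ((-1 : ℝ) ^ t * (Nat.choose (t + s) (s+1) : ℝ)) • totalDer^[t] (pderiv (i, α + (s+1) + t) f) := by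
        rw [Finset.sum_add_distrib]
        congr 1
        rw [PN]
        apply Finset.sum_congr rfl; intro t _
        have : α + 1 + s + t = α + (s+1) + t := by omega
        rw [this]
    _ = PN i (α+1) s (N+1) f - totalDer (PN i (α+1) (s+1) N f) := by
        rw [sub_eq_add_neg]
        congr 1
        rw [Finset.sum_range_succ']
        have h0 : ((-1:ℝ)^0 * (Nat.choose (0+s) (s+1) : ℝ)) • totalDer^[0] (pderiv (i, α+(s+1)+0) f) = 0 := by
          rw [Nat.choose_eq_zero_of_lt (by omega)]
          simp
        rw [h0, add_zero, PN, totalDer_sum, ← Finset.sum_neg_distrib]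
        apply Finset.sum_congr rfl
        intro t _
        rw [totalDer_smul, ← Function.iterate_succ_apply' totalDer]
        have h1 : α + (s+1) + (t+1) = α + 1 + (s+1) + t := by omega
        rw [h1]
        have h2 : ((-1:ℝ)^(t+1) * (Nat.choose (t+1+s) (s+1) : ℝ))
            = -((-1:ℝ)^t * (Nat.choose (t+(s+1)) (s+1) : ℝ)) := by
          have : t+1+s = t+(s+1) := by omega
          rw [this, pow_succ]
          ring
        rw [h2, neg_smul]

lemma R0p (i : Fin n) (α : ℕ) (f : DP n) :
    pmom i α 0 f = pderiv (i, α) f - totalDer (pmom i (α+1) 0 f) := by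
  rw [pmom_eq_PN (N := vbound f + 1) (by omega), PN_R0,
    ← pmom_eq_PN (N := vbound f) le_rfl]

lemma R1p (i : Fin n) (α s : ℕ) (f : DP n) :
    pmom i α (s+1) f = pmom i (α+1) s f - totalDer (pmom i (α+1) (s+1) f) := by
  rw [pmom_eq_PN (N := vbound f + 1) (by omega), PN_R1,
    ← pmom_eq_PN (N := vbound f) le_rfl, ← pmom_eq_PN (N := vbound f + 1) (by omega)]

end Aux2

namespace Aux3
open Aux Aux2
variable {n : ℕ}

lemma descend {P : ℕ → Prop} (A : ℕ) (base : ∀ α, A ≤ α → P α)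
    (step : ∀ α, P (α+1) → P α) : ∀ α, P α := by
  have key : ∀ d α, A ≤ α + d → P α := by
    intro d
    induction d with
    | zero => intro α h; exact base α (by omega)
    | succ d ih =>
      intro α h
      by_cases hc : A ≤ α
      · exact base α hc
      · exact step α (ih (α+1) (by omega))
  intro α
  exact key A α (by omega)

lemma totalDer_sub (a b : DP n) : totalDer (a - b) = totalDer a - totalDer b :=
  map_sub TD a b

lemma pd_sub (v : Fin n × ℕ) (a b : DP n) :
    pderiv v (a - b) = pderiv v a - pderiv v b := map_sub _ a b

lemma pd_zero (v : Fin n × ℕ) : pderiv v (0 : DP n) = 0 := map_zero _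

lemma star_base (s : ℕ) (i j : Fin n) (f : DP n) (β : ℕ)
    (h1 : vbound (pmom j 0 0 f) ≤ β) (h2 : vbound f ≤ β)
    (h3 : vbound (pmom j (s+1) 0 f) ≤ β) :
    pmom i (β+1) s (pmom j 0 0 f)
      = ((-1:ℝ)^s) • pderiv (j,s) (pmom i (β+1) 0 f)
        - ((-1:ℝ)^s) • pderiv (i,β) (pmom j (s+1) 0 f) := by
  rw [pmom_vanish (by omega), pmom_vanish (show vbound f ≤ β+1 by omega),
    pderiv_vanish h3, pd_zero]
  simp

lemma star (s : ℕ) (i j : Fin n) (f : DP n) : ∀ β,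
    pmom i (β+1) s (pmom j 0 0 f)
      = ((-1:ℝ)^s) • pderiv (j,s) (pmom i (β+1) 0 f)
        - ((-1:ℝ)^s) • pderiv (i,β) (pmom j (s+1) 0 f) := by
  induction s with
  | zero =>
    refine descend (P := fun β => pmom i (β+1) 0 (pmom j 0 0 f)
        = ((-1:ℝ)^0) • pderiv (j,0) (pmom i (β+1) 0 f)
          - ((-1:ℝ)^0) • pderiv (i,β) (pmom j (0+1) 0 f))
      (A := max (vbound (pmom j 0 0 f)) (max (vbound f) (vbound (pmom j 1 0 f))))
      (fun β hβ => ?_) (fun β IH => ?_)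
    · 
      exact star_base 0 i j f β (le_trans (le_max_left _ _) hβ)
        (le_trans (le_trans (le_max_left _ _) (le_max_right _ _)) hβ)
        (le_trans (le_trans (le_max_right _ _) (le_max_right _ _)) hβ)
    · simp only [pow_zero, one_smul] at IH ⊢
      have hA : pmom i (β+1) 0 (pmom j 0 0 f)
          = pderiv (i,β+1) (pmom j 0 0 f) - totalDer (pmom i (β+1+1) 0 (pmom j 0 0 f)) :=
        R0p i (β+1) (pmom j 0 0 f)
      have hBtd : totalDer (pmom i (β+1+1) 0 (pmom j 0 0 f))
          = totalDer (pderiv (j,0) (pmom i (β+1+1) 0 f))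
            - totalDer (pderiv (i,β+1) (pmom j 1 0 f)) := by
        rw [IH, totalDer_sub]
      have hc1 : totalDer (pderiv (j,0) (pmom i (β+1+1) 0 f))
          = pderiv (j,0) (totalDer (pmom i (β+1+1) 0 f)) := (commA0 j _).symm
      have hd1 : totalDer (pmom i (β+1+1) 0 f) = pderiv (i,β+1) f - pmom i (β+1) 0 f := by
        linear_combination R0p i (β+1) f
      have hd1' : pderiv (j,0) (totalDer (pmom i (β+1+1) 0 f))
          = pderiv (j,0) (pderiv (i,β+1) f) - pderiv (j,0) (pmom i (β+1) 0 f) := by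
        rw [hd1, pd_sub]
      have he : totalDer (pderiv (i,β+1) (pmom j 1 0 f))
          = pderiv (i,β+1) (totalDer (pmom j 1 0 f)) - pderiv (i,β) (pmom j 1 0 f) := by
        linear_combination - (commAS i β (pmom j 1 0 f))
      have hf1 : totalDer (pmom j 1 0 f) = pderiv (j,0) f - pmom j 0 0 f := by
        linear_combination R0p j 0 f
      have hf1' : pderiv (i,β+1) (totalDer (pmom j 1 0 f))
          = pderiv (i,β+1) (pderiv (j,0) f) - pderiv (i,β+1) (pmom j 0 0 f) := by
        rw [hf1, pd_sub]
      have hcomm : pderiv (j,0) (pderiv (i,β+1) f) = pderiv (i,β+1) (pderiv (j,0) f) :=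
        pderiv_comm _ _ f
      rw [hA, hBtd, hc1, hd1', he, hf1', hcomm]
      ring
  | succ s IHout =>
    refine descend (P := fun β => pmom i (β+1) (s+1) (pmom j 0 0 f)
        = ((-1:ℝ)^(s+1)) • pderiv (j,s+1) (pmom i (β+1) 0 f)
          - ((-1:ℝ)^(s+1)) • pderiv (i,β) (pmom j (s+1+1) 0 f))
      (A := max (vbound (pmom j 0 0 f)) (max (vbound f) (vbound (pmom j (s+2) 0 f))))
      (fun β hβ => ?_) (fun β IHin => ?_)
    · 
      exact star_base (s+1) i j f β (le_trans (le_max_left _ _) hβ)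
        (le_trans (le_trans (le_max_left _ _) (le_max_right _ _)) hβ)
        (le_trans (le_trans (le_max_right _ _) (le_max_right _ _)) hβ)
    · have hA : pmom i (β+1) (s+1) (pmom j 0 0 f)
          = pmom i (β+1+1) s (pmom j 0 0 f) - totalDer (pmom i (β+1+1) (s+1) (pmom j 0 0 f)) :=
        R1p i (β+1) s (pmom j 0 0 f)
      have hB := IHout (β+1)
      have hCtd : totalDer (pmom i (β+1+1) (s+1) (pmom j 0 0 f))
          = ((-1:ℝ)^(s+1)) • totalDer (pderiv (j,s+1) (pmom i (β+1+1) 0 f))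
            - ((-1:ℝ)^(s+1)) • totalDer (pderiv (i,β+1) (pmom j (s+2) 0 f)) := by
        rw [IHin, totalDer_sub, totalDer_smul, totalDer_smul]
      have hD : totalDer (pderiv (j,s+1) (pmom i (β+1+1) 0 f))
          = pderiv (j,s+1) (totalDer (pmom i (β+1+1) 0 f)) - pderiv (j,s) (pmom i (β+1+1) 0 f) := by
        linear_combination - (commAS j s (pmom i (β+1+1) 0 f))
      have hE : totalDer (pmom i (β+1+1) 0 f) = pderiv (i,β+1) f - pmom i (β+1) 0 f := by
        linear_combination R0p i (β+1) f
      have hE' : pderiv (j,s+1) (totalDer (pmom i (β+1+1) 0 f))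
          = pderiv (j,s+1) (pderiv (i,β+1) f) - pderiv (j,s+1) (pmom i (β+1) 0 f) := by
        rw [hE, pd_sub]
      have hF : totalDer (pderiv (i,β+1) (pmom j (s+2) 0 f))
          = pderiv (i,β+1) (totalDer (pmom j (s+2) 0 f)) - pderiv (i,β) (pmom j (s+2) 0 f) := by
        linear_combination - (commAS i β (pmom j (s+2) 0 f))
      have hG : totalDer (pmom j (s+2) 0 f) = pderiv (j,s+1) f - pmom j (s+1) 0 f := by
        linear_combination R0p j (s+1) f
      have hG' : pderiv (i,β+1) (totalDer (pmom j (s+2) 0 f))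
          = pderiv (i,β+1) (pderiv (j,s+1) f) - pderiv (i,β+1) (pmom j (s+1) 0 f) := by
        rw [hG, pd_sub]
      have hcomm : pderiv (j,s+1) (pderiv (i,β+1) f) = pderiv (i,β+1) (pderiv (j,s+1) f) :=
        pderiv_comm _ _ f
      rw [hA, hB, hCtd, hD, hE', hF, hG', hcomm]
      module

end Aux3

namespace Aux4
open Aux Aux2 Aux3
variable {n : ℕ}

lemma mem_vars_lt {f : DP n} {v : Fin n × ℕ} (h : v ∈ f.vars) : v.2 < vbound f := by
  have : v.2 ≤ f.vars.sup (fun v => v.2) := Finset.le_sup (f := fun v => v.2) h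
  unfold vbound; omega

lemma sum_shift {M : Type*} [AddCommMonoid M] (N : ℕ) (F : ℕ → M) :
    ∑ α ∈ Finset.Icc 1 N, F α = ∑ β ∈ Finset.range N, F (β+1) := by
  rw [show Finset.Icc 1 N = Finset.Ico 1 (N+1) by rw [Finset.Ico_add_one_right_eq_Icc],
    Finset.sum_Ico_eq_sum_range]
  simp only [Nat.add_sub_cancel]
  exact Finset.sum_congr rfl fun β _ => by rw [add_comm]

lemma Eop_prod {f : DP n} {N : ℕ} (hN : vbound f ≤ N) (s : ℕ) :
    Eop s f = ∑ v ∈ (Finset.univ : Finset (Fin n)) ×ˢ Finset.range N,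
      X (v.1, v.2+1) * pmom v.1 (v.2+1) s f := by
  rw [Eop, Finset.sum_product]
  apply Finset.sum_congr rfl
  intro i _
  rw [← sum_shift N (fun α => X (i, α) * pmom i α s f)]
  apply Finset.sum_subset (Finset.Icc_subset_Icc_right hN)
  intro α hα hα'
  rw [Finset.mem_Icc] at hα hα'
  rw [pmom_vanish (by omega), mul_zero]

lemma pd_X (j : Fin n) (s : ℕ) (v : Fin n × ℕ) :
    pderiv (j,s) (X (v.1, v.2+1) : DP n) = if (v.1, v.2+1) = (j,s) then 1 else 0 := by
  by_cases h : ((v.1 : Fin n), v.2+1) = (j,s)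
  · rw [if_pos h, h, pderiv_X_self]
  · rw [if_neg h, pderiv_X_of_ne h]

lemma Eop_delta (s : ℕ) (j : Fin n) (f : DP n) :
    Eop s (pmom j 0 0 f)
      = ((-1:ℝ)^s) • pderiv (j,s) (Eop 0 f)
        - ((-1:ℝ)^s) • (if 1 ≤ s then pmom j s 0 f else 0)
        - ((-1:ℝ)^s) • totalDer (pmom j (s+1) 0 f) := by
  classical
  set g := pmom j 0 0 f with hg
  set h := pmom j (s+1) 0 f with hh
  set N := max (max (vbound g) (vbound f)) (max (vbound h) (s+1)) with hN
  set P := (Finset.univ : Finset (Fin n)) ×ˢ Finset.range N with hP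
  have hvarsh : h.vars ⊆ P := by
    intro v hv
    rw [hP, Finset.mem_product, Finset.mem_range]
    exact ⟨Finset.mem_univ _, lt_of_lt_of_le (mem_vars_lt hv) (by omega)⟩
  have step1 : Eop s g = ∑ v ∈ P, X (v.1, v.2+1) * pmom v.1 (v.2+1) s g :=
    Eop_prod (by omega) s
  have step2 : ∀ v ∈ P, X (v.1, v.2+1) * pmom v.1 (v.2+1) s g
      = ((-1:ℝ)^s) • (X (v.1, v.2+1) * pderiv (j,s) (pmom v.1 (v.2+1) 0 f))
        - ((-1:ℝ)^s) • (X (v.1, v.2+1) * pderiv v h) := by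
    intro v _
    rw [hg, star s v.1 j f v.2, mul_sub, mul_smul_comm, mul_smul_comm]
  have step4 : ∑ v ∈ P, X (v.1, v.2+1) * pderiv v h = totalDer h :=
    (totalDer_eq_sum hvarsh).symm
  have step5 : pderiv (j,s) (Eop 0 f)
      = (if 1 ≤ s then pmom j s 0 f else 0)
        + ∑ v ∈ P, X (v.1, v.2+1) * pderiv (j,s) (pmom v.1 (v.2+1) 0 f) := by
    rw [Eop_prod (f := f) (N := N) (by omega) 0, map_sum]
    have expand : ∀ v ∈ P, pderiv (j,s) (X (v.1, v.2+1) * pmom v.1 (v.2+1) 0 f)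
        = (if (v.1, v.2+1) = (j,s) then pmom v.1 (v.2+1) 0 f else 0)
          + X (v.1, v.2+1) * pderiv (j,s) (pmom v.1 (v.2+1) 0 f) := by
      intro v _
      rw [pderiv_mul, pd_X]
      congr 1
      by_cases hc : ((v.1 : Fin n), v.2+1) = (j,s)
      · rw [if_pos hc, if_pos hc, one_mul]
      · rw [if_neg hc, if_neg hc, zero_mul]
    rw [Finset.sum_congr rfl expand, Finset.sum_add_distrib]
    congr 1
    rcases s with _ | s'
    · rw [if_neg (by omega)]
      apply Finset.sum_eq_zero
      intro v _
      rw [if_neg (by simp)]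
    · rw [if_pos (by omega)]
      have conv1 : ∀ v ∈ P, (if ((v.1 : Fin n), v.2+1) = (j,s'+1) then pmom v.1 (v.2+1) 0 f else 0)
          = (if v = (j,s') then pmom v.1 (v.2+1) 0 f else 0) := by
        intro v _
        by_cases hc : v = (j, s')
        · subst hc; simp
        · have hcc : ¬ ((v.1, v.2+1) = (j, s'+1)) := by
            intro hcc
            apply hc
            have h1 : v.1 = j := congrArg Prod.fst hcc
            have h2 : v.2 + 1 = s' + 1 := congrArg Prod.snd hcc
            exact Prod.ext h1 (by omega)
          rw [if_neg hcc, if_neg hc]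
      rw [Finset.sum_congr rfl conv1, Finset.sum_ite_eq' P (j,s')
        (fun v => pmom v.1 (v.2+1) 0 f)]
      rw [if_pos (by rw [hP, Finset.mem_product, Finset.mem_range]; exact ⟨Finset.mem_univ _, by omega⟩)]
  rw [step1, Finset.sum_congr rfl step2, Finset.sum_sub_distrib,
    ← Finset.smul_sum, ← Finset.smul_sum, step4]
  have step5' : ∑ v ∈ P, X (v.1, v.2+1) * pderiv (j,s) (pmom v.1 (v.2+1) 0 f)
      = pderiv (j,s) (Eop 0 f) - (if 1 ≤ s then pmom j s 0 f else 0) := by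
    rw [step5]; ring
  rw [step5', smul_sub]

end Aux4


/-- `E ∘ δ_j = ∂_{j,0} ∘ E` and, for `t ≥ 1`, `E_t ∘ δ_j = (-1)^t ∂_{j,t} ∘ E`. -/
theorem stmt19 {n : ℕ} (j : Fin n) :
    (∀ f : DP n, Ener (pmom j 0 0 f) = pderiv (j, 0) (Ener f)) ∧
    (∀ t : ℕ, 1 ≤ t → ∀ f : DP n,
      Eop t (pmom j 0 0 f) = ((-1 : ℝ) ^ t) • pderiv (j, t) (Ener f)) := by
  constructor
  · intro f
    rw [Ener, Ener, Aux4.Eop_delta 0 j f, Aux3.pd_sub]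
    rw [if_neg (by omega : ¬ 1 ≤ 0)]
    simp only [pow_zero, one_smul]
    linear_combination - (Aux2.R0p j 0 f)
  · intro t ht f
    rw [Aux4.Eop_delta t j f, Ener, Aux3.pd_sub, if_pos ht, Aux2.R0p j t f]
    module
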